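/- Let m, n, h ∈ ℕ with 0 < h ≤ min(m,n), r = m+n−2h, and let T_0, …, T_n be the EPOSIC Kraus operators of Φ_{m,n,h}. Then for every unit vector w ∈ ℂ^{r+1} there exist indices j₁, j₂ with 0 ≤ j₁, j₂ ≤ n such that the vectors T_{j₁}w and T_{j₂}w in ℂ^{m+1} are linearly independent. -/

import Mathlib

open scoped BigOperators Matrix
open Matrix

/-- Binomial coefficient `C(a, b)` with an integer lower argument (zero if `b < 0`),
as a real number. -/
noncomputable def Cb (a : ℕ) (b : ℤ) : ℝ :=
  if 0 ≤ b then (a.choose b.toNat : ℝ) else 0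

/-- The coefficient `β_{i,s,j}` of the EPOSIC channel `Φ_{m,n,h}`. -/
noncomputable def epsBeta (m n h : ℕ) (i s j : ℤ) : ℝ :=
  ((-1 : ℝ) ^ s * Cb h s * Cb (n - h) (j - s) * Cb (m - h) (i - j + s)) /
    Real.sqrt (Cb (m + n - 2 * h) i * Cb m (i - j + h) * Cb n j *
      ∑ k ∈ Finset.range (h + 1),
        (h.choose k : ℝ) ^ 2 / ((m.choose (h - k) : ℝ) * (n.choose k : ℝ)))

/-- The coefficient `ε_i^j = ε_i^j(m,n,h)` of the EPOSIC channel `Φ_{m,n,h}`. -/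
noncomputable def eps (m n h : ℕ) (i j : ℤ) : ℝ :=
  ∑ s ∈ Finset.Icc (max 0 (max (j - i) (j + h - n)))
      (min (h : ℤ) (min j (j + m - i - h))),
    epsBeta m n h i s j

/-- The `j`-th EPOSIC Kraus operator of `Φ_{m,n,h}`: the `(m+1) × (r+1)` matrix
(`r = m + n - 2h`) whose `(i - j + h, i)` entry is `ε_i^j` for
`max{0, j-h} ≤ i ≤ min{r, m-h+j}`, all other entries being `0`. -/
noncomputable def kraus (m n h j : ℕ) : Matrix (Fin (m + 1)) (Fin (m + n - 2 * h + 1)) ℂ :=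
  Matrix.of fun l i =>
    if (l : ℤ) = (i : ℤ) - j + h ∧ max 0 ((j : ℤ) - h) ≤ (i : ℤ) ∧
        (i : ℤ) ≤ min ((m : ℤ) + n - 2 * h) ((m : ℤ) - h + j)
      then ((eps m n h i j : ℝ) : ℂ) else 0

/-- The EPOSIC channel `Φ_{m,n,h}`. -/
noncomputable def eposic (m n h : ℕ)
    (A : Matrix (Fin (m + n - 2 * h + 1)) (Fin (m + n - 2 * h + 1)) ℂ) :
    Matrix (Fin (m + 1)) (Fin (m + 1)) ℂ :=
  ∑ j ∈ Finset.range (n + 1), kraus m n h j * A * (kraus m n h j)ᴴ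

private lemma Cb_pos' {a : ℕ} {b : ℤ} (h0 : 0 ≤ b) (hb : b ≤ (a : ℤ)) : 0 < Cb a b := by
  rw [Cb, if_pos h0]
  have : b.toNat ≤ a := by omega
  exact_mod_cast Nat.choose_pos this
private lemma sum_pos' (m n h : ℕ) (hm : h ≤ m) (hn : h ≤ n) :
    0 < ∑ k ∈ Finset.range (h + 1),
      (h.choose k : ℝ) ^ 2 / ((m.choose (h - k) : ℝ) * (n.choose k : ℝ)) := by
  apply Finset.sum_pos
  · intro k hk
    rw [Finset.mem_range] at hk
    have h1 : 0 < (h.choose k : ℝ) := by exact_mod_cast Nat.choose_pos (by omega)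
    have h2 : 0 < (m.choose (h - k) : ℝ) := by exact_mod_cast Nat.choose_pos (by omega)
    have h3 : 0 < (n.choose k : ℝ) := by exact_mod_cast Nat.choose_pos (by omega)
    positivity
  · exact ⟨0, Finset.mem_range.mpr (Nat.succ_pos h)⟩
private lemma epsBeta_ne (m n h : ℕ) (hm : h ≤ m) (hn : h ≤ n) (i s j : ℤ)
    (hs0 : 0 ≤ s) (hsh : s ≤ (h:ℤ))
    (hjs0 : 0 ≤ j - s) (hjs1 : j - s ≤ (n:ℤ) - h)
    (hij0 : 0 ≤ i - j + s) (hij1 : i - j + s ≤ (m:ℤ) - h)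
    (hi0 : 0 ≤ i) (hir : i ≤ (m:ℤ) + n - 2*h)
    (hmj0 : 0 ≤ i - j + h) (hmj1 : i - j + h ≤ (m:ℤ))
    (hj0 : 0 ≤ j) (hjn : j ≤ (n:ℤ)) :
    epsBeta m n h i s j ≠ 0 := by
  have c1 : 0 < Cb h s := Cb_pos' hs0 hsh
  have c2 : 0 < Cb (n - h) (j - s) := Cb_pos' hjs0 (by omega)
  have c3 : 0 < Cb (m - h) (i - j + s) := Cb_pos' hij0 (by omega)
  have d1 : 0 < Cb (m + n - 2*h) i := Cb_pos' hi0 (by omega)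
  have d2 : 0 < Cb m (i - j + h) := Cb_pos' hmj0 hmj1
  have d3 : 0 < Cb n j := Cb_pos' hj0 hjn
  have d4 := sum_pos' m n h hm hn
  have hz : ((-1:ℝ))^s ≠ 0 := zpow_ne_zero s (by norm_num)
  rw [epsBeta]
  exact div_ne_zero
    (mul_ne_zero (mul_ne_zero (mul_ne_zero hz c1.ne') c2.ne') c3.ne')
    (Real.sqrt_pos.mpr (mul_pos (mul_pos (mul_pos d1 d2) d3) d4)).ne'
private lemma eps_single (m n h : ℕ) (i j s₀ : ℤ)
    (hL : max 0 (max (j - i) (j + h - n)) = s₀)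
    (hU : min (h:ℤ) (min j (j + m - i - h)) = s₀) :
    eps m n h i j = epsBeta m n h i s₀ j := by
  rw [eps, hL, hU, Finset.Icc_self, Finset.sum_singleton]
private lemma li_pair {N : ℕ} (x y : Fin N → ℂ) (a b : Fin N)
    (hxa : x a ≠ 0) (hya : y a = 0) (hyb : y b ≠ 0) :
    LinearIndependent ℂ ![x, y] := by
  rw [linearIndependent_fin2]
  simp only [Matrix.cons_val_one, Matrix.head_cons, Matrix.cons_val_zero]
  refine ⟨fun h => hyb (by rw [h]; rfl), fun c hc => ?_⟩
  have h2 := congrFun hc a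
  simp only [Pi.smul_apply, hya, smul_zero] at h2
  exact hxa h2.symm

theorem stmt5 (m n h : ℕ) (h0 : 0 < h) (hh : h ≤ min m n)
    (w : EuclideanSpace ℂ (Fin (m + n - 2 * h + 1))) (hw : ‖w‖ = 1) :
    ∃ j₁ j₂ : Fin (n + 1),
      LinearIndependent ℂ
        ![(kraus m n h j₁).mulVec (fun i => w i), (kraus m n h j₂).mulVec (fun i => w i)] := by
  classical
  have hm : h ≤ m := le_trans hh (min_le_left m n)
  have hn : h ≤ n := le_trans hh (min_le_right m n)
  have hex : ∃ k : ℕ, ∃ hk : k < m + n - 2*h + 1, w ⟨k, hk⟩ ≠ 0 := by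
    by_contra hc
    push_neg at hc
    have hz : w = 0 := by
      ext i
      have := hc i.1 i.2
      simpa using this
    rw [hz] at hw; simp at hw
  obtain ⟨hk₀, hwk₀⟩ := Nat.find_spec hex
  set k₀ := Nat.find hex with hk₀def
  have hmin : ∀ i : Fin (m + n - 2*h + 1), (i:ℕ) < k₀ → w i = 0 := by
    intro i hi
    have h1 := Nat.find_min hex hi
    push_neg at h1
    simpa using h1 i.2
  set j₁ := k₀ + h - m with hj₁
  set j₂ := min n (k₀ + h) with hj₂
  set a := k₀ + h - j₂ with hadef
  set b := min (k₀ + h) m with hbdef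
  have hk₀r : k₀ ≤ m + n - 2*h := by omega
  have hj₁n : j₁ < n + 1 := by omega
  have hj₂n : j₂ < n + 1 := by omega
  have hab : a < b := by omega
  have hbm : b < m + 1 := by omega
  have ham : a < m + 1 := by omega
  -- epsilon facts
  have heps2 : eps m n h k₀ j₂ ≠ 0 := by
    rw [eps_single m n h k₀ j₂ h (by omega) (by omega)]
    exact epsBeta_ne m n h hm hn _ _ _ (by omega) (by omega) (by omega) (by omega)
      (by omega) (by omega) (by omega) (by omega) (by omega) (by omega) (by omega) (by omega)
  have heps1 : eps m n h k₀ j₁ ≠ 0 := by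
    rw [eps_single m n h k₀ j₁ 0 (by omega) (by omega)]
    exact epsBeta_ne m n h hm hn _ _ _ (by omega) (by omega) (by omega) (by omega)
      (by omega) (by omega) (by omega) (by omega) (by omega) (by omega) (by omega) (by omega)
  refine ⟨⟨j₂, hj₂n⟩, ⟨j₁, hj₁n⟩, ?_⟩
  apply li_pair _ _ (⟨a, ham⟩ : Fin (m+1)) (⟨b, hbm⟩ : Fin (m+1))
  · -- x a ≠ 0
    show (kraus m n h j₂).mulVec (fun i => w i) ⟨a, ham⟩ ≠ 0
    have hval : (kraus m n h j₂).mulVec (fun i => w i) ⟨a, ham⟩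
        = ((eps m n h k₀ j₂ : ℝ) : ℂ) * w ⟨k₀, hk₀⟩ := by
      rw [Matrix.mulVec, dotProduct]
      rw [Fintype.sum_eq_single (⟨k₀, hk₀⟩ : Fin (m + n - 2*h + 1))]
      · rw [kraus]
        simp only [Matrix.of_apply]
        rw [if_pos]
        refine ⟨?_, ?_, ?_⟩ <;> omega
      · intro i hi
        rw [kraus]
        simp only [Matrix.of_apply]
        rw [if_neg, zero_mul]
        rintro ⟨h1, -, -⟩
        apply hi
        apply Fin.ext
        simp only [Fin.val_mk] at h1 ⊢
        omega
    rw [hval]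
    exact mul_ne_zero (by exact_mod_cast heps2) hwk₀
  · -- y a = 0
    show (kraus m n h j₁).mulVec (fun i => w i) ⟨a, ham⟩ = 0
    rw [Matrix.mulVec, dotProduct]
    apply Finset.sum_eq_zero
    intro i _
    rw [kraus]
    simp only [Matrix.of_apply]
    by_cases hc : (((⟨a, ham⟩ : Fin (m+1)) : ℕ) : ℤ) = (i : ℤ) - j₁ + h ∧
        max 0 ((j₁ : ℤ) - h) ≤ (i : ℤ) ∧
        (i : ℤ) ≤ min ((m : ℤ) + n - 2 * h) ((m : ℤ) - h + j₁)
    · rw [if_pos hc]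
      have hiw : w i = 0 := by
        apply hmin
        have h1 := hc.1
        simp only [Fin.val_mk] at h1
        omega
      rw [hiw, mul_zero]
    · rw [if_neg hc, zero_mul]
  · -- y b ≠ 0
    show (kraus m n h j₁).mulVec (fun i => w i) ⟨b, hbm⟩ ≠ 0
    have hval : (kraus m n h j₁).mulVec (fun i => w i) ⟨b, hbm⟩
        = ((eps m n h k₀ j₁ : ℝ) : ℂ) * w ⟨k₀, hk₀⟩ := by
      rw [Matrix.mulVec, dotProduct]
      rw [Fintype.sum_eq_single (⟨k₀, hk₀⟩ : Fin (m + n - 2*h + 1))]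
      · rw [kraus]
        simp only [Matrix.of_apply]
        rw [if_pos]
        refine ⟨?_, ?_, ?_⟩ <;> omega
      · intro i hi
        rw [kraus]
        simp only [Matrix.of_apply]
        rw [if_neg, zero_mul]
        rintro ⟨h1, -, -⟩
        apply hi
        apply Fin.ext
        simp only [Fin.val_mk] at h1 ⊢
        omega
    rw [hval]
    exact mul_ne_zero (by exact_mod_cast heps1) hwk₀
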